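/- Let f : [0,1] → [0,1] be a homeomorphism whose set of non-wandering points is finite. Then for every integer k ≥ 1, the polynomial entropy of the induced map f^{*k} on the k-fold symmetric product [0,1]^{*k} equals k. -/

import Mathlib

open Filter Topology TopologicalSpace Set
open scoped ENNReal

/-- The dynamic distance `d_n^f(x,y) = max_{0 ≤ k ≤ n-1} d(f^k x, f^k y)`. -/
noncomputable def dynDist {X : Type*} [MetricSpace X] (f : X → X) (n : ℕ) (x y : X) : ℝ :=
  ((Finset.range n).sup fun k => nndist (f^[k] x) (f^[k] y) : NNReal)

/-- A finite set `E` is `(n,ε)`-separated for `f`. -/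
def IsDynSeparated {X : Type*} [MetricSpace X] (f : X → X) (n : ℕ) (ε : ℝ) (E : Finset X) :
    Prop :=
  ∀ x ∈ E, ∀ y ∈ E, x ≠ y → ε ≤ dynDist f n x y

/-- `S(n,ε;Y)`: the maximal cardinality of an `(n,ε)`-separated subset of `Y`. -/
noncomputable def maxSep {X : Type*} [MetricSpace X] (f : X → X) (Y : Set X) (n : ℕ) (ε : ℝ) :
    ℕ :=
  sSup {m : ℕ | ∃ E : Finset X, ↑E ⊆ Y ∧ E.card = m ∧ IsDynSeparated f n ε E}

/-- The polynomial entropy `h_pol(f;Y)`.  Since `ε ↦ S(n,ε;Y)` is nonincreasing, the limit as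
`ε → 0` of the `limsup` coincides with the supremum over `ε > 0`. -/
noncomputable def polEnt {X : Type*} [MetricSpace X] (f : X → X) (Y : Set X) : ℝ≥0∞ :=
  ⨆ (ε : ℝ) (_ : 0 < ε),
    Filter.atTop.limsup fun n : ℕ =>
      ENNReal.ofReal (Real.log (maxSep f Y n ε) / Real.log n)

/-- The set of non-wandering points of `f`. -/
def nonWandering {X : Type*} [TopologicalSpace X] (f : X → X) : Set X :=
  {p | ∀ U ∈ nhds p, ∃ n : ℕ, 1 ≤ n ∧ (f^[n] '' U ∩ U).Nonempty}

/-- The induced map `2^f` on the hyperspace of nonempty closed (= compact) subsets of a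
compact metric space. -/
noncomputable def induced2 {X : Type*} [TopologicalSpace X] (f : X → X) (hf : Continuous f) :
    NonemptyCompacts X → NonemptyCompacts X :=
  fun A => ⟨⟨f '' A, A.isCompact.image hf⟩, A.nonempty.image f⟩

/-- The hyperspace `C(X)` of subcontinua (nonempty closed connected subsets) of `X`. -/
abbrev Subcontinua (X : Type*) [TopologicalSpace X] :=
  {A : NonemptyCompacts X // IsConnected (A : Set X)}

/-- The induced map `C(f)` on the hyperspace of subcontinua. -/
noncomputable def inducedC {X : Type*} [TopologicalSpace X] (f : X → X) (hf : Continuous f) :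
    Subcontinua X → Subcontinua X :=
  fun A => ⟨induced2 f hf A.1, A.2.image f hf.continuousOn⟩

/-- The `k`-fold symmetric product `X^{*k}`: nonempty subsets of `X` with at most `k` points. -/
abbrev SymProd (X : Type*) [TopologicalSpace X] (k : ℕ) :=
  {A : NonemptyCompacts X // (A : Set X).Finite ∧ (A : Set X).ncard ≤ k}

/-- The induced map `f^{*k}` on the `k`-fold symmetric product. -/
noncomputable def inducedSym {X : Type*} [TopologicalSpace X] (f : X → X) (hf : Continuous f)
    (k : ℕ) : SymProd X k → SymProd X k :=
  fun A => ⟨induced2 f hf A.1, A.2.1.image f, le_trans (Set.ncard_image_le A.2.1) A.2.2⟩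

/-- Sets `U 0, …, U (L-1)` are mutually singular for `f`. -/
def MutuallySingularSets {X : Type*} [TopologicalSpace X] (f : X → X) {L : ℕ}
    (U : Fin L → Set X) : Prop :=
  ∀ M : ℕ, ∃ x : X, ∃ n : Fin L → ℕ, (∀ j, 1 ≤ n j ∧ f^[n j] x ∈ U j) ∧
    ∀ i j, i ≠ j → (M : ℤ) < |(n i : ℤ) - (n j : ℤ)|

/-- A finite set `S ⊆ X \ NW(f)` is singular: it consists of mutually singular points, i.e.
every family of respective neighbourhoods of its points is mutually singular. -/
def IsSingularSet {X : Type*} [TopologicalSpace X] (f : X → X) (S : Set X) : Prop :=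
  S.Finite ∧ (∀ x ∈ S, x ∉ nonWandering f) ∧
  ∀ (L : ℕ) (x : Fin L → X), Function.Injective x → Set.range x = S →
    ∀ U : Fin L → Set X, (∀ j, U j ∈ nhds (x j)) → MutuallySingularSets f U

/-- The set of codings of length-`n` orbit segments of points of `Y` relative to the family
`F`, where the letter `none` stands for `Y_∞ = Y \ ⋃ F`. -/
def codings {X : Type*} (f : X → X) {L : ℕ} (F : Fin L → Set X) (Y : Set X) (n : ℕ) :
    Set (Fin n → Option (Fin L)) :=
  {w | ∃ x ∈ Y, ∀ j : Fin n, match w j with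
    | some i => f^[(j : ℕ)] x ∈ F i
    | none => f^[(j : ℕ)] x ∈ Y \ ⋃ i, F i}

/-- The polynomial entropy of `f` on `Y` relative to the family `F`:
`limsup_n log #A_n(F;Y) / log n`. -/
noncomputable def polEntRel {X : Type*} (f : X → X) {L : ℕ} (F : Fin L → Set X) (Y : Set X) :
    ℝ≥0∞ :=
  Filter.atTop.limsup fun n : ℕ =>
    ENNReal.ofReal (Real.log ((codings f F Y n).ncard) / Real.log n)

/-- The circle is connected. -/
theorem circle_isConnected_univ : IsConnected (Set.univ : Set Circle) := by
  have hsurj : Function.Surjective Circle.exp := fun z => ⟨Complex.arg z, Circle.exp_arg z⟩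
  have : ConnectedSpace Circle :=
    { toPreconnectedSpace := ⟨by
        rw [← Set.image_univ_of_surjective hsurj]
        exact isPreconnected_univ.image _ Circle.exp.continuous.continuousOn⟩,
      toNonempty := ⟨1⟩ }
  exact isConnected_univ
section DynDist
variable {X : Type*} [MetricSpace X] (f : X → X)

theorem dynDist_nonneg (n : ℕ) (x y : X) : 0 ≤ dynDist f n x y := NNReal.coe_nonneg _

theorem dynDist_comm (n : ℕ) (x y : X) : dynDist f n x y = dynDist f n y x := by
  unfold dynDist; congr 1; apply Finset.sup_congr rfl; intros; exact nndist_comm _ _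

theorem dynDist_self (n : ℕ) (x : X) : dynDist f n x x = 0 := by
  unfold dynDist
  have : ((Finset.range n).sup fun k => nndist (f^[k] x) (f^[k] x)) = 0 := by
    simp
  rw [this]; rfl

theorem dist_le_dynDist {n t : ℕ} (ht : t < n) (x y : X) :
    dist (f^[t] x) (f^[t] y) ≤ dynDist f n x y := by
  rw [dist_nndist]
  exact_mod_cast Finset.le_sup (f := fun k => nndist (f^[k] x) (f^[k] y))
    (Finset.mem_range.mpr ht)

theorem le_dynDist_of_time {n t : ℕ} (ht : t < n) {ε : ℝ} {x y : X}
    (h : ε ≤ dist (f^[t] x) (f^[t] y)) : ε ≤ dynDist f n x y :=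
  h.trans (dist_le_dynDist f ht x y)

theorem dynDist_le_of {n : ℕ} {δ : ℝ} (hδ : 0 ≤ δ) {x y : X}
    (H : ∀ t < n, dist (f^[t] x) (f^[t] y) ≤ δ) : dynDist f n x y ≤ δ := by
  unfold dynDist
  have : ((Finset.range n).sup fun k => nndist (f^[k] x) (f^[k] y)) ≤ δ.toNNReal := by
    apply Finset.sup_le
    intro t ht
    have := H t (Finset.mem_range.mp ht)
    rw [dist_nndist] at this
    exact_mod_cast le_trans this (Real.le_coe_toNNReal δ)
  calc ((Finset.range n).sup fun k => nndist (f^[k] x) (f^[k] y) : NNReal) ≤ (δ.toNNReal : ℝ) :=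
        by exact_mod_cast this
    _ = δ := Real.coe_toNNReal δ hδ

theorem exists_time_of_le_dynDist {n : ℕ} {ε : ℝ} (hε : 0 < ε) {x y : X}
    (h : ε ≤ dynDist f n x y) : ∃ t < n, ε ≤ dist (f^[t] x) (f^[t] y) := by
  rcases Nat.eq_zero_or_pos n with rfl | hn
  · exact absurd (h.trans_lt (by simpa [dynDist] using hε)) (lt_irrefl ε)
  · obtain ⟨t, ht, hts⟩ := Finset.exists_mem_eq_sup (Finset.range n)
      (Finset.nonempty_range_iff.mpr hn.ne') (fun k => nndist (f^[k] x) (f^[k] y))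
    refine ⟨t, Finset.mem_range.mp ht, ?_⟩
    rw [dist_nndist]
    calc ε ≤ dynDist f n x y := h
      _ = _ := by rw [dynDist, hts]

theorem dynDist_triangle (n : ℕ) (x y z : X) :
    dynDist f n x z ≤ dynDist f n x y + dynDist f n y z := by
  unfold dynDist
  rw [← NNReal.coe_add, NNReal.coe_le_coe]
  apply Finset.sup_le
  intro t ht
  exact le_trans (nndist_triangle _ (f^[t] y) _)
    (add_le_add (Finset.le_sup (f := fun k => nndist (f^[k] x) (f^[k] y)) ht)
      (Finset.le_sup (f := fun k => nndist (f^[k] y) (f^[k] z)) ht))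

theorem dynDist_mono {m n : ℕ} (h : m ≤ n) (x y : X) :
    dynDist f m x y ≤ dynDist f n x y := by
  unfold dynDist
  rw [NNReal.coe_le_coe]
  exact Finset.sup_mono (Finset.range_subset_range.mpr h)

end DynDist
section Counting
open Classical

abbrev UI := ↥unitInterval

theorem UI.dist_eq (x y : UI) : dist x y = |(x : ℝ) - y| := by
  rw [Subtype.dist_eq, Real.dist_eq]

/-- Betweenness: if `b` is between `a` and `c`, then `dist a b ≤ dist a c`. -/
theorem UI.dist_between {a b c : UI} (h : (a ≤ b ∧ b ≤ c) ∨ (c ≤ b ∧ b ≤ a)) :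
    dist a b ≤ dist a c := by
  rw [UI.dist_eq, UI.dist_eq]
  rcases h with ⟨h1, h2⟩ | ⟨h1, h2⟩
  · have h1' : (a:ℝ) ≤ b := h1
    have h2' : (b:ℝ) ≤ c := h2
    rw [abs_sub_comm, abs_of_nonneg (by linarith), abs_sub_comm, abs_of_nonneg (by linarith)]
    linarith
  · have h1' : (c:ℝ) ≤ b := h1
    have h2' : (b:ℝ) ≤ a := h2
    rw [abs_of_nonneg (by linarith), abs_of_nonneg (by linarith)]
    linarith

/-- Core counting lemma: a dynamically separated set for a (strictly) monotone-in-iterates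
map of the unit interval has cardinality at most `1 + n * (⌊1/ε⌋ + 1)`. -/
theorem card_le_of_separated {f : UI → UI}
    (hmono : ∀ t : ℕ, StrictMono f^[t] ∨ StrictAnti f^[t])
    {n : ℕ} {ε : ℝ} (hε : 0 < ε) {E : Finset UI} (hsep : IsDynSeparated f n ε E) :
    E.card ≤ 1 + n * (⌊1/ε⌋₊ + 1) := by
  rcases Finset.eq_empty_or_nonempty E with rfl | hne
  · simp
  set M := E.max' hne with hM
  -- successor function
  have hnext : ∀ x ∈ E.erase M, ∃ y, y ∈ E ∧ x < y ∧ ∀ z ∈ E, x < z → y ≤ z := by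
    intro x hx
    have hxE : x ∈ E := Finset.mem_of_mem_erase hx
    have hxM : x < M := lt_of_le_of_ne (Finset.le_max' E x hxE) (Finset.ne_of_mem_erase hx)
    have hfne : (E.filter (fun y => x < y)).Nonempty :=
      ⟨M, Finset.mem_filter.mpr ⟨E.max'_mem hne, hxM⟩⟩
    refine ⟨(E.filter (fun y => x < y)).min' hfne, ?_, ?_, ?_⟩
    · exact (Finset.mem_filter.mp ((E.filter _).min'_mem hfne)).1
    · exact (Finset.mem_filter.mp ((E.filter _).min'_mem hfne)).2
    · intro z hz hxz
      exact Finset.min'_le _ z (Finset.mem_filter.mpr ⟨hz, hxz⟩)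
  -- separation time for x and its successor
  have htime : ∀ x ∈ E.erase M, ∃ t, t < n ∧
      ∀ z ∈ E, x < z → ε ≤ dist (f^[t] x) (f^[t] z) := by
    intro x hx
    obtain ⟨y, hyE, hxy, hymin⟩ := hnext x hx
    have hd : ε ≤ dynDist f n x y :=
      hsep x (Finset.mem_of_mem_erase hx) y hyE (ne_of_lt hxy)
    obtain ⟨t, ht, hts⟩ := exists_time_of_le_dynDist f hε hd
    refine ⟨t, ht, ?_⟩
    intro z hz hxz
    refine le_trans hts ?_
    apply UI.dist_between
    rcases hmono t with hm | hm
    · exact Or.inl ⟨(hm hxy).le, hm.monotone (hymin z hz hxz)⟩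
    · exact Or.inr ⟨hm.antitone (hymin z hz hxz), (hm hxy).le⟩
  -- the injection
  set T : UI → ℕ := fun x => if h : ∃ t, t < n ∧
      ∀ z ∈ E, x < z → ε ≤ dist (f^[t] x) (f^[t] z) then h.choose else 0 with hT
  set G : UI → ℕ × ℕ := fun x => (T x, ⌊(f^[T x] x : ℝ) / ε⌋₊) with hG
  have hGmem : ∀ x ∈ E.erase M, G x ∈ Finset.range n ×ˢ Finset.range (⌊1/ε⌋₊ + 1) := by
    intro x hx
    obtain h := htime x hx
    rw [Finset.mem_product, Finset.mem_range, Finset.mem_range]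
    constructor
    · simp only [hG, hT, dif_pos h]
      exact h.choose_spec.1
    · have h2 : (f^[T x] x : ℝ) ≤ 1 := (f^[T x] x).2.2
      exact Nat.lt_succ_of_le (Nat.floor_mono (by gcongr))
  -- injectivity
  have hinj : ∀ x ∈ E.erase M, ∀ y ∈ E.erase M, x < y → G x = G y → False := by
    intro x hx y hy hxy hGxy
    have hTeq : T x = T y := congrArg Prod.fst hGxy
    have hfl : ⌊(f^[T x] x : ℝ) / ε⌋₊ = ⌊(f^[T x] y : ℝ) / ε⌋₊ := by
      have := congrArg Prod.snd hGxy
      simpa [hG, hTeq] using this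
    obtain h := htime x hx
    have hTx : T x = h.choose := by simp only [hT, dif_pos h]
    have hsep' : ε ≤ dist (f^[T x] x) (f^[T x] y) := by
      rw [hTx]; exact h.choose_spec.2 y (Finset.mem_of_mem_erase hy) hxy
    -- equal floors imply distance < ε
    have hclose : dist (f^[T x] x) (f^[T x] y) < ε := by
      rw [UI.dist_eq]
      set a := (f^[T x] x : ℝ)
      set b := (f^[T x] y : ℝ)
      have ha0 : 0 ≤ a / ε := div_nonneg (f^[T x] x).2.1 hε.le
      have hb0 : 0 ≤ b / ε := div_nonneg (f^[T x] y).2.1 hε.le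
      have h1 : |a / ε - b / ε| < 1 := by
        have hfla : (⌊a/ε⌋₊ : ℝ) ≤ a/ε := Nat.floor_le ha0
        have hflb : (⌊b/ε⌋₊ : ℝ) ≤ b/ε := Nat.floor_le hb0
        have hlta : a/ε < ⌊a/ε⌋₊ + 1 := Nat.lt_floor_add_one _
        have hltb : b/ε < ⌊b/ε⌋₊ + 1 := Nat.lt_floor_add_one _
        have hflr : (⌊a/ε⌋₊ : ℝ) = (⌊b/ε⌋₊ : ℝ) := by exact_mod_cast hfl
        rw [abs_lt]
        constructor <;> linarith
      have hab : a - b = ε * (a / ε - b / ε) := by field_simp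
      rw [hab, abs_mul, abs_of_pos hε]
      calc ε * |a / ε - b / ε| < ε * 1 := by
            exact mul_lt_mul_of_pos_left h1 hε
        _ = ε := mul_one ε
    exact absurd hsep' (not_le.mpr hclose)
  have hcard : (E.erase M).card ≤ (Finset.range n ×ˢ Finset.range (⌊1/ε⌋₊ + 1)).card := by
    apply Finset.card_le_card_of_injOn G hGmem
    intro x hx y hy hxy
    by_contra hne'
    rcases lt_or_gt_of_ne hne' with h | h
    · exact hinj x hx y hy h hxy
    · exact hinj y hy x hx h hxy.symm
  have herase : (E.erase M).card = E.card - 1 := Finset.card_erase_of_mem (E.max'_mem hne)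
  have hpos : 1 ≤ E.card := Finset.card_pos.mpr hne
  rw [Finset.card_product, Finset.card_range, Finset.card_range] at hcard
  omega

end Counting
section Spanning
variable {X : Type*} [MetricSpace X]

/-- Existence of a maximal `(n,δ)`-separated, hence `(n,δ)`-spanning, set. -/
theorem exists_spanning_finset (f : X → X) (n : ℕ) {δ : ℝ} (hδ : 0 < δ) {B : ℕ}
    (hB : ∀ E : Finset X, IsDynSeparated f n δ E → E.card ≤ B) :
    ∃ D : Finset X, IsDynSeparated f n δ D ∧ D.card ≤ B ∧
      ∀ x : X, ∃ y ∈ D, dynDist f n x y < δ := by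
  classical
  set S : Set ℕ := {m : ℕ | ∃ E : Finset X, IsDynSeparated f n δ E ∧ E.card = m} with hS
  have hne : S.Nonempty := ⟨0, ∅, by intro x hx; simp at hx, rfl⟩
  have hbdd : BddAbove S := ⟨B, by rintro m ⟨E, hE, rfl⟩; exact hB E hE⟩
  obtain ⟨D, hD, hDcard⟩ := Nat.sSup_mem hne hbdd
  refine ⟨D, hD, hDcard ▸ hB D hD, ?_⟩
  intro x
  by_contra hc
  push_neg at hc
  have hxD : x ∉ D := fun hxD => by
    have := hc x hxD
    rw [dynDist_self] at this
    exact absurd hδ (not_lt.mpr this)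
  have hins : IsDynSeparated f n δ (insert x D) := by
    intro a ha b hb hab
    rcases Finset.mem_insert.mp ha with rfl | haD
    · rcases Finset.mem_insert.mp hb with rfl | hbD
      · exact absurd rfl hab
      · exact hc b hbD
    · rcases Finset.mem_insert.mp hb with rfl | hbD
      · rw [dynDist_comm]; exact hc a haD
      · exact hD a haD b hbD hab
  have : (insert x D).card ≤ sSup S := le_csSup hbdd ⟨insert x D, hins, rfl⟩
  rw [Finset.card_insert_of_notMem hxD, hDcard] at this
  omega

end Spanning

section SymProdFacts
variable {X : Type*} [MetricSpace X] {k : ℕ}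

theorem symProd_dist_eq (A B : SymProd X k) :
    dist A B = Metric.hausdorffDist (A.1 : Set X) (B.1 : Set X) := by
  rw [Subtype.dist_eq]; rfl

theorem inducedSym_iterate (f : X → X) (hf : Continuous f) (t : ℕ) (A : SymProd X k) :
    (((inducedSym f hf k)^[t] A).1 : Set X) = f^[t] '' (A.1 : Set X) := by
  induction t with
  | zero => simp
  | succ t ih =>
    rw [Function.iterate_succ_apply']
    show f '' (((inducedSym f hf k)^[t] A).1 : Set X) = _
    rw [ih, ← Set.image_comp, ← Function.iterate_succ']

/-- Build an element of `SymProd X k` from a nonempty finset of size at most `k`. -/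
noncomputable def symOf (F : Finset X) (hne : F.Nonempty) (hcard : F.card ≤ k) : SymProd X k :=
  ⟨⟨⟨(F : Set X), F.finite_toSet.isCompact⟩, by exact_mod_cast hne⟩,
    F.finite_toSet, by show (F : Set X).ncard ≤ k; rw [Set.ncard_coe_finset]; exact hcard⟩

@[simp] theorem symOf_coe (F : Finset X) (hne : F.Nonempty) (hcard : F.card ≤ k) :
    ((symOf F hne hcard).1 : Set X) = (F : Set X) := rfl

end SymProdFacts
section UpperBound
variable {X : Type*} [MetricSpace X]

theorem symOf_eq_symOf {k : ℕ} {F G : Finset X} (h : F = G) (h1 : F.Nonempty) (h2 : F.card ≤ k)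
    (h3 : G.Nonempty) (h4 : G.card ≤ k) : (symOf F h1 h2 : SymProd X k) = symOf G h3 h4 := by
  subst h; rfl

theorem card_le_of_separated_sym {f : X → X} {hf : Continuous f} {k n : ℕ}
    {ε δ : ℝ} (hδ : 0 < δ) (hεδ : 2 * δ < ε) (D : Finset X)
    (hspan : ∀ x : X, ∃ y ∈ D, dynDist f n x y ≤ δ)
    (E : Finset (SymProd X k)) (hsep : IsDynSeparated (inducedSym f hf k) n ε E) :
    E.card ≤ (k + 1) * (D.card + 1) ^ k := by
  classical
  set c : X → X := fun x => (hspan x).choose with hc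
  have hcD : ∀ x : X, c x ∈ D := fun x => (hspan x).choose_spec.1
  have hcdyn : ∀ x : X, dynDist f n x (c x) ≤ δ := fun x => (hspan x).choose_spec.2
  set Φ : SymProd X k → Finset X := fun A => (A.2.1.toFinset).image c with hΦ
  have hΦne : ∀ A : SymProd X k, (Φ A).Nonempty := by
    intro A
    apply Finset.image_nonempty.mpr
    rw [Set.Finite.toFinset_nonempty]
    exact A.1.nonempty
  have hΦcard : ∀ A : SymProd X k, (Φ A).card ≤ k := by
    intro A
    refine le_trans (Finset.card_image_le) ?_
    rw [← Set.ncard_eq_toFinset_card _ A.2.1]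
    exact A.2.2
  have hΦcoe : ∀ A : SymProd X k, ((Φ A) : Set X) = c '' (A.1 : Set X) := by
    intro A
    rw [hΦ]
    push_cast
    rw [Set.Finite.coe_toFinset]
  -- each A is dynamically close to its shadow
  have hclose : ∀ A : SymProd X k,
      dynDist (inducedSym f hf k) n A (symOf (Φ A) (hΦne A) (hΦcard A)) ≤ δ := by
    intro A
    apply dynDist_le_of _ hδ.le
    intro t ht
    rw [symProd_dist_eq, inducedSym_iterate, inducedSym_iterate, symOf_coe, hΦcoe]
    apply Metric.hausdorffDist_le_of_mem_dist hδ.le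
    · rintro p ⟨a, ha, rfl⟩
      exact ⟨f^[t] (c a), Set.mem_image_of_mem _ (Set.mem_image_of_mem _ ha),
        (dist_le_dynDist f ht a (c a)).trans (hcdyn a)⟩
    · rintro q ⟨b, ⟨a, ha, rfl⟩, rfl⟩
      refine ⟨f^[t] a, Set.mem_image_of_mem _ ha, ?_⟩
      rw [dist_comm]
      exact (dist_le_dynDist f ht a (c a)).trans (hcdyn a)
  -- injectivity of the shadow map on E
  have hinj : ∀ A ∈ E, ∀ B ∈ E, Φ A = Φ B → A = B := by
    intro A hA B hB hAB
    by_contra hne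
    have h1 := hclose A
    have h2 := hclose B
    have heq : symOf (Φ A) (hΦne A) (hΦcard A) = symOf (Φ B) (hΦne B) (hΦcard B) :=
      symOf_eq_symOf hAB _ _ _ _
    have hAB' := hsep A hA B hB hne
    rw [heq] at h1
    rw [dynDist_comm] at h2
    have htri := dynDist_triangle (inducedSym f hf k) n A
      (symOf (Φ B) (hΦne B) (hΦcard B)) B
    linarith
  -- counting
  set P : Finset (Finset X) :=
    (Finset.range (k+1)).biUnion (fun j => Finset.powersetCard j D) with hP
  have hmem : ∀ A ∈ E, Φ A ∈ P := by
    intro A _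
    apply Finset.mem_biUnion.mpr
    refine ⟨(Φ A).card, Finset.mem_range.mpr (Nat.lt_succ_of_le (hΦcard A)), ?_⟩
    apply Finset.mem_powersetCard.mpr
    exact ⟨fun x hx => by
      obtain ⟨a, _, rfl⟩ := Finset.mem_image.mp hx
      exact hcD a, rfl⟩
  have hEcard : E.card ≤ P.card :=
    Finset.card_le_card_of_injOn Φ hmem (fun A hA B hB => hinj A hA B hB)
  have hPcard : P.card ≤ (k + 1) * (D.card + 1) ^ k := by
    refine le_trans (Finset.card_biUnion_le) ?_
    have : ∀ j ∈ Finset.range (k+1), (Finset.powersetCard j D).card ≤ (D.card + 1) ^ k := by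
      intro j hj
      rw [Finset.card_powersetCard]
      calc D.card.choose j ≤ D.card ^ j := Nat.choose_le_pow _ _
        _ ≤ (D.card + 1) ^ j := Nat.pow_le_pow_left (Nat.le_succ _) _
        _ ≤ (D.card + 1) ^ k := Nat.pow_le_pow_right (Nat.succ_le_succ (Nat.zero_le _))
            (Nat.lt_succ_iff.mp (Finset.mem_range.mp hj))
    calc ∑ j ∈ Finset.range (k+1), (Finset.powersetCard j D).card
        ≤ ∑ _j ∈ Finset.range (k+1), (D.card + 1) ^ k := Finset.sum_le_sum this
      _ = (k + 1) * (D.card + 1) ^ k := by rw [Finset.sum_const, Finset.card_range, smul_eq_mul]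
  exact hEcard.trans hPcard

/-- Explicit polynomial bound for separated sets in the symmetric product of the interval. -/
theorem sym_sep_card_le {f : UI → UI}
    (hmono : ∀ t : ℕ, StrictMono f^[t] ∨ StrictAnti f^[t]) (hf : Continuous f)
    {k n : ℕ} {ε : ℝ} (hε : 0 < ε)
    (E : Finset (SymProd UI k)) (hsep : IsDynSeparated (inducedSym f hf k) n ε E) :
    E.card ≤ (k + 1) * (n * (⌊3/ε⌋₊ + 1) + 2) ^ k := by
  have hδ : 0 < ε / 3 := by linarith
  have hB : ∀ F : Finset UI, IsDynSeparated f n (ε/3) F → F.card ≤ 1 + n * (⌊3/ε⌋₊ + 1) := by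
    intro F hF
    have := card_le_of_separated hmono hδ hF
    rwa [one_div_div] at this
  obtain ⟨D, hDsep, hDcard, hDspan⟩ := exists_spanning_finset f n hδ hB
  have := card_le_of_separated_sym (hf := hf) hδ (by linarith) D
    (fun x => by obtain ⟨y, hy, h⟩ := hDspan x; exact ⟨y, hy, h.le⟩) E hsep
  calc E.card ≤ (k + 1) * (D.card + 1) ^ k := this
    _ ≤ (k + 1) * (n * (⌊3/ε⌋₊ + 1) + 2) ^ k := by
        apply Nat.mul_le_mul_left
        apply Nat.pow_le_pow_left
        omega

theorem maxSep_sym_le {f : UI → UI}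
    (hmono : ∀ t : ℕ, StrictMono f^[t] ∨ StrictAnti f^[t]) (hf : Continuous f)
    {k n : ℕ} {ε : ℝ} (hε : 0 < ε) :
    maxSep (inducedSym f hf k) Set.univ n ε ≤ (k + 1) * (n * (⌊3/ε⌋₊ + 1) + 2) ^ k := by
  apply csSup_le
  · exact ⟨0, ∅, by simp, rfl, by intro x hx; simp at hx⟩
  · rintro m ⟨E, -, rfl, hsep⟩
    exact sym_sep_card_le hmono hf hε E hsep

theorem bddAbove_sepSet {f : UI → UI}
    (hmono : ∀ t : ℕ, StrictMono f^[t] ∨ StrictAnti f^[t]) (hf : Continuous f)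
    {k n : ℕ} {ε : ℝ} (hε : 0 < ε) :
    BddAbove {m : ℕ | ∃ E : Finset (SymProd UI k), ↑E ⊆ (Set.univ : Set (SymProd UI k)) ∧
      E.card = m ∧ IsDynSeparated (inducedSym f hf k) n ε E} := by
  refine ⟨(k + 1) * (n * (⌊3/ε⌋₊ + 1) + 2) ^ k, ?_⟩
  rintro m ⟨E, -, rfl, hsep⟩
  exact sym_sep_card_le hmono hf hε E hsep

end UpperBound
section LowerBound

/-- Inverse of a strictly monotone permutation is strictly monotone. -/
theorem strictMono_inv {α : Type*} [LinearOrder α] {e : Equiv.Perm α} (he : StrictMono ⇑e) :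
    StrictMono ⇑e⁻¹ := by
  intro a b hab
  by_contra h
  push_neg at h
  have := he.le_iff_le.mpr h
  simp only [Equiv.Perm.inv_def, Equiv.apply_symm_apply] at this
  exact absurd hab (not_lt.mpr this)

theorem strictMono_zpow {α : Type*} [LinearOrder α] {e : Equiv.Perm α} (he : StrictMono ⇑e)
    (j : ℤ) : StrictMono ⇑(e ^ j) := by
  rcases Int.eq_nat_or_neg j with ⟨m, rfl | rfl⟩
  · rw [zpow_natCast, Equiv.Perm.coe_pow]
    exact he.iterate m
  · rw [zpow_neg, zpow_natCast]
    have : StrictMono ⇑(e ^ m) := by rw [Equiv.Perm.coe_pow]; exact he.iterate m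
    exact strictMono_inv this

theorem zpow_apply_zpow {α : Type*} (e : Equiv.Perm α) (s t : ℤ) (x : α) :
    (e ^ t) ((e ^ s) x) = (e ^ (t + s)) x := by
  rw [zpow_add]
  rfl

variable {f : UI → UI}

/-- The main lower-bound construction. -/
theorem choose_le_maxSep_sym
    (hmono : ∀ t : ℕ, StrictMono f^[t] ∨ StrictAnti f^[t]) (hf : Continuous f)
    {ψ : Equiv.Perm UI} (hψmono : StrictMono ⇑ψ) {p : ℕ} (hp : 0 < p)
    (hψf : ∀ m : ℕ, ⇑(ψ ^ m) = f^[p * m]) {c : UI} (hc : ψ c ≠ c)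
    {k : ℕ} (hk : 1 ≤ k) :
    ∃ ε₀ : ℝ, 0 < ε₀ ∧ ∀ n : ℕ,
      (n / p).choose k ≤ maxSep (inducedSym f hf k) Set.univ n ε₀ := by
  classical
  set z : ℤ → UI := fun j => (ψ ^ j) c with hz
  have hz_add : ∀ s t : ℤ, (ψ ^ t) (z s) = z (t + s) := fun s t => zpow_apply_zpow ψ s t c
  have hz_mono : StrictMono z ∨ StrictAnti z := by
    rcases lt_or_gt_of_ne hc with h | h
    · right
      apply strictAnti_int_of_succ_lt
      intro j
      have : (ψ ^ j) (ψ c) < (ψ ^ j) c := strictMono_zpow hψmono j h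
      rw [show ψ c = z 1 by rw [hz]; simp [zpow_one]] at this
      rw [hz_add 1 j] at this
      exact this
    · left
      apply strictMono_int_of_lt_succ
      intro j
      have : (ψ ^ j) c < (ψ ^ j) (ψ c) := strictMono_zpow hψmono j h
      rw [show ψ c = z 1 by rw [hz]; simp [zpow_one]] at this
      rw [hz_add 1 j] at this
      exact this
  have hz_inj : Function.Injective z := by
    rcases hz_mono with h | h
    exacts [h.injective, h.injective]
  set ε₀ : ℝ := min (dist (z 1) (z 0)) (dist (z (-1)) (z 0)) with hε₀
  have hε₀pos : 0 < ε₀ := by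
    apply lt_min
    · exact dist_pos.mpr (fun h => by simpa using hz_inj h)
    · exact dist_pos.mpr (fun h => by simpa using hz_inj h)
  have hfar : ∀ i : ℤ, i ≠ 0 → ε₀ ≤ dist (z 0) (z i) := by
    intro i hi
    rcases hz_mono with h | h
    · rcases lt_or_gt_of_ne hi with hneg | hpos
      · refine le_trans (min_le_right _ _) ?_
        rw [dist_comm (z (-1)) (z 0)]
        exact UI.dist_between (Or.inr ⟨h.monotone (by omega : i ≤ -1), (h (by omega : (-1:ℤ) < 0)).le⟩)
      · refine le_trans (min_le_left _ _) ?_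
        rw [dist_comm (z 1) (z 0)]
        exact UI.dist_between (Or.inl ⟨(h (by omega : (0:ℤ) < 1)).le, h.monotone (by omega : 1 ≤ i)⟩)
    · rcases lt_or_gt_of_ne hi with hneg | hpos
      · refine le_trans (min_le_right _ _) ?_
        rw [dist_comm (z (-1)) (z 0)]
        exact UI.dist_between (Or.inl ⟨(h (by omega : (-1:ℤ) < 0)).le, h.antitone (by omega : i ≤ -1)⟩)
      · refine le_trans (min_le_left _ _) ?_
        rw [dist_comm (z 1) (z 0)]
        exact UI.dist_between (Or.inr ⟨h.antitone (by omega : 1 ≤ i), (h (by omega : (0:ℤ) < 1)).le⟩)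
  refine ⟨ε₀, hε₀pos, ?_⟩
  intro n
  set m : ℕ := n / p with hm
  rcases Nat.eq_zero_or_pos m with hm0 | hmpos
  · rw [hm0, Nat.choose_eq_zero_of_lt hk]
    exact Nat.zero_le _
  -- the k-point sets
  have hTne : ∀ T ∈ Finset.powersetCard k (Finset.range m), (T.image (fun t : ℕ => z (-(t:ℤ)))).Nonempty := by
    intro T hT
    apply Finset.image_nonempty.mpr
    apply Finset.card_pos.mp
    rw [(Finset.mem_powersetCard.mp hT).2]
    omega
  have hTcard : ∀ T : Finset ℕ, (T.image (fun t : ℕ => z (-(t:ℤ)))).card ≤ T.card :=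
    fun T => Finset.card_image_le
  set pt : SymProd UI k := symOf {z 0} (Finset.singleton_nonempty _)
    (by rw [Finset.card_singleton]; exact hk) with hpt
  set A : Finset ℕ → SymProd UI k := fun T =>
    if h : (T.image (fun t : ℕ => z (-(t:ℤ)))).Nonempty ∧
        (T.image (fun t : ℕ => z (-(t:ℤ)))).card ≤ k
    then symOf _ h.1 h.2 else pt with hA
  have hAcoe : ∀ T ∈ Finset.powersetCard k (Finset.range m),
      ((A T).1 : Set UI) = ((T.image (fun t : ℕ => z (-(t:ℤ)))) : Set UI) := by
    intro T hT
    have hcond : (T.image (fun t : ℕ => z (-(t:ℤ)))).Nonempty ∧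
        (T.image (fun t : ℕ => z (-(t:ℤ)))).card ≤ k :=
      ⟨hTne T hT, (hTcard T).trans (le_of_eq (Finset.mem_powersetCard.mp hT).2)⟩
    rw [hA]
    simp only [dif_pos hcond]
    exact symOf_coe _ _ _
  -- image of the set A T at time p * t
  have himg : ∀ (t : ℕ) (T : Finset ℕ),
      f^[p*t] '' ((T.image (fun s : ℕ => z (-(s:ℤ)))) : Set UI)
        = ((T.image (fun s : ℕ => z ((t:ℤ) - s))) : Set UI) := by
    intro t T
    rw [← hψf t, Finset.coe_image, Finset.coe_image, Set.image_image]
    apply Set.image_congr'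
    intro s
    have : ⇑(ψ ^ t) = ⇑(ψ ^ (t:ℤ)) := by rw [zpow_natCast]
    rw [this, hz_add, sub_eq_add_neg]
  -- separation
  have hkey : ∀ T ∈ Finset.powersetCard k (Finset.range m),
      ∀ S ∈ Finset.powersetCard k (Finset.range m),
      ∀ t ∈ T, t ∉ S → ε₀ ≤ dynDist (inducedSym f hf k) n (A T) (A S) := by
    intro T hT S hS t htT htS
    have htm : t < m := Finset.mem_range.mp ((Finset.mem_powersetCard.mp hT).1 htT)
    have hpm : p * m ≤ n := by rw [hm, mul_comm]; exact Nat.div_mul_le_self n p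
    have hptn : p * t < n := by
      have h1 : p * (t + 1) ≤ p * m := Nat.mul_le_mul_left p htm
      have h2 : p * (t+1) = p * t + p := by ring
      omega
    apply le_dynDist_of_time _ hptn
    rw [symProd_dist_eq, inducedSym_iterate, inducedSym_iterate, hAcoe T hT, hAcoe S hS,
      himg, himg]
    have hmemT : z 0 ∈ ((T.image (fun s : ℕ => z ((t:ℤ) - s))) : Set UI) := by
      rw [Finset.coe_image]
      exact ⟨t, htT, by simp⟩
    have hSne : ((S.image (fun s : ℕ => z ((t:ℤ) - s))) : Set UI).Nonempty := by
      rw [Finset.coe_image]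
      apply Set.Nonempty.image
      rw [Finset.coe_nonempty]
      apply Finset.card_pos.mp
      rw [(Finset.mem_powersetCard.mp hS).2]
      omega
    have hinf : ε₀ ≤ Metric.infDist (z 0) ((S.image (fun s : ℕ => z ((t:ℤ) - s))) : Set UI) := by
      by_contra hcon
      push_neg at hcon
      obtain ⟨y, hy, hylt⟩ := (Metric.infDist_lt_iff hSne).mp hcon
      rw [Finset.coe_image] at hy
      obtain ⟨s, hsS, rfl⟩ := hy
      have hts : (t:ℤ) - s ≠ 0 := by
        intro hh
        have hts' : t = s := by omega
        exact htS (hts' ▸ hsS)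
      exact absurd hylt (not_lt.mpr (hfar _ hts))
    refine le_trans hinf ?_
    apply Metric.infDist_le_hausdorffDist_of_mem hmemT
    apply Metric.hausdorffEdist_ne_top_of_nonempty_of_bounded ⟨z 0, hmemT⟩ hSne
    · exact (Finset.finite_toSet _).isBounded
    · exact (Finset.finite_toSet _).isBounded
  -- conclude
  have hsub : ∀ T ∈ Finset.powersetCard k (Finset.range m),
      ∀ S ∈ Finset.powersetCard k (Finset.range m), T ≠ S →
      ∃ t ∈ T, t ∉ S := by
    intro T hT S hS hTS
    by_contra hcon
    push_neg at hcon
    have hsub : T ⊆ S := hcon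
    have := Finset.eq_of_subset_of_card_le hsub (by
      rw [(Finset.mem_powersetCard.mp hT).2, (Finset.mem_powersetCard.mp hS).2])
    exact hTS this
  have hAinj : Set.InjOn A (Finset.powersetCard k (Finset.range m)) := by
    intro T hT S hS hATS
    by_contra hTS
    obtain ⟨t, htT, htS⟩ := hsub T hT S hS hTS
    have := hkey T hT S hS t htT htS
    rw [hATS, dynDist_self] at this
    exact absurd (hε₀pos.trans_le this) (lt_irrefl _)
  set E : Finset (SymProd UI k) := (Finset.powersetCard k (Finset.range m)).image A with hE
  have hEcard : E.card = m.choose k := by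
    rw [hE, Finset.card_image_of_injOn hAinj, Finset.card_powersetCard, Finset.card_range]
  have hEsep : IsDynSeparated (inducedSym f hf k) n ε₀ E := by
    intro x hx y hy hxy
    obtain ⟨T, hT, rfl⟩ := Finset.mem_image.mp hx
    obtain ⟨S, hS, rfl⟩ := Finset.mem_image.mp hy
    have hTS : T ≠ S := fun h => hxy (by rw [h])
    obtain ⟨t, htT, htS⟩ := hsub T hT S hS hTS
    exact hkey T hT S hS t htT htS
  calc m.choose k = E.card := hEcard.symm
    _ ≤ maxSep (inducedSym f hf k) Set.univ n ε₀ :=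
        le_csSup (bddAbove_sepSet hmono hf hε₀pos) ⟨E, by simp, rfl, hEsep⟩

end LowerBound
section Setup

theorem UI.infinite : Infinite UI := Set.Icc.infinite zero_lt_one

/-- If some iterate of `f` is the identity, all points are non-wandering. -/
theorem nonWandering_univ_of_iterate_id {X : Type*} [TopologicalSpace X] {f : X → X} {q : ℕ}
    (hq : 1 ≤ q) (h : ∀ x, f^[q] x = x) : nonWandering f = Set.univ := by
  apply Set.eq_univ_of_forall
  intro x U hU
  exact ⟨q, hq, ⟨x, ⟨x, mem_of_mem_nhds hU, h x⟩, mem_of_mem_nhds hU⟩⟩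

theorem iterates_mono_or_anti {f : UI → UI} (h : StrictMono f ∨ StrictAnti f) :
    ∀ t : ℕ, StrictMono f^[t] ∨ StrictAnti f^[t] := by
  intro t
  rcases h with h | h
  · exact Or.inl (h.iterate t)
  · induction t with
    | zero => exact Or.inl strictMono_id
    | succ t ih =>
      rw [Function.iterate_succ']
      rcases ih with ih | ih
      · exact Or.inr (h.comp_strictMono ih)
      · exact Or.inl (h.comp ih)

theorem setup_exists (f : UI ≃ₜ UI) (hNW : (nonWandering ⇑f).Finite) :
    (∀ t : ℕ, StrictMono (⇑f)^[t] ∨ StrictAnti (⇑f)^[t]) ∧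
    ∃ (p : ℕ), 0 < p ∧ ∃ ψ : Equiv.Perm UI, StrictMono ⇑ψ ∧
      (∀ m : ℕ, ⇑(ψ ^ m) = (⇑f)^[p * m]) ∧ ∃ c : UI, ψ c ≠ c := by
  haveI : Fact ((0:ℝ) ≤ 1) := ⟨zero_le_one⟩
  haveI : Infinite UI := UI.infinite
  have hmoa : StrictMono ⇑f ∨ StrictAnti ⇑f :=
    f.continuous.strictMono_of_inj_boundedOrder' f.injective
  refine ⟨iterates_mono_or_anti hmoa, ?_⟩
  have hNW_ne_univ : ∀ q : ℕ, 1 ≤ q → ¬ (∀ x : UI, (⇑f)^[q] x = x) := by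
    intro q hq hid
    have := nonWandering_univ_of_iterate_id hq hid
    rw [this] at hNW
    exact Set.infinite_univ hNW
  rcases hmoa with h | h
  · refine ⟨1, one_pos, f.toEquiv, ?_, ?_, ?_⟩
    · rw [Homeomorph.coe_toEquiv]; exact h
    · intro m
      rw [Equiv.Perm.coe_pow, one_mul, Homeomorph.coe_toEquiv]
    · by_contra hcon
      push_neg at hcon
      apply hNW_ne_univ 1 le_rfl
      intro x
      simpa using hcon x
  · refine ⟨2, two_pos, f.toEquiv ^ 2, ?_, ?_, ?_⟩
    · intro a b hab
      have h1 : (f.toEquiv ^ 2) a = f (f a) := by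
        rw [pow_two, Equiv.Perm.mul_apply]; rfl
      have h2 : (f.toEquiv ^ 2) b = f (f b) := by
        rw [pow_two, Equiv.Perm.mul_apply]; rfl
      rw [h1, h2]
      exact h (h hab)
    · intro m
      rw [← pow_mul, Equiv.Perm.coe_pow, Homeomorph.coe_toEquiv]
    · by_contra hcon
      push_neg at hcon
      apply hNW_ne_univ 2 (by norm_num)
      intro x
      have := hcon x
      rw [pow_two, Equiv.Perm.mul_apply] at this
      simpa using this

end Setup
section Limit
open Filter Real

theorem tendsto_log_ratio {S : ℕ → ℕ} {k p : ℕ} (hk : 1 ≤ k) (hp : 0 < p) {C1 C2 : ℝ}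
    (hC1 : 1 ≤ C1) (hC2 : 1 ≤ C2)
    (hup : ∀ n : ℕ, 2 ≤ n → (S n : ℝ) ≤ C1 * (C2 * n) ^ k)
    (hlo : ∀ n : ℕ, (n / p).choose k ≤ S n) :
    Tendsto (fun n : ℕ => Real.log (S n) / Real.log n) atTop (nhds (k : ℝ)) := by
  have hlogn : Tendsto (fun n : ℕ => Real.log n) atTop atTop :=
    Real.tendsto_log_atTop.comp tendsto_natCast_atTop_atTop
  have hinv : Tendsto (fun n : ℕ => (Real.log n)⁻¹) atTop (nhds 0) :=
    hlogn.inv_tendsto_atTop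
  set c1 : ℝ := k * Real.log (2 * p) + Real.log (k.factorial) with hc1
  set c2 : ℝ := Real.log C1 + k * Real.log C2 with hc2
  have hA : Tendsto (fun n : ℕ => (k : ℝ) - c1 * (Real.log n)⁻¹) atTop (nhds (k : ℝ)) := by
    have := (hinv.const_mul c1).const_sub (k : ℝ)
    simpa using this
  have hB : Tendsto (fun n : ℕ => (k : ℝ) + c2 * (Real.log n)⁻¹) atTop (nhds (k : ℝ)) := by
    have := (hinv.const_mul c2).const_add (k : ℝ)
    simpa using this
  apply tendsto_of_tendsto_of_tendsto_of_le_of_le' hA hB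
  · -- lower bound eventually
    filter_upwards [eventually_ge_atTop (max 3 (2 * p * (k + 1)))] with n hn
    have hn3 : 3 ≤ n := le_trans (le_max_left _ _) hn
    have hnp : 2 * p * (k + 1) ≤ n := le_trans (le_max_right _ _) hn
    have hn3R : (3:ℝ) ≤ (n:ℝ) := by exact_mod_cast hn3
    have hlogpos : 0 < Real.log n := Real.log_pos (by linarith)
    have hppos : (0:ℝ) < p := by exact_mod_cast hp
    set m : ℕ := n / p with hm
    have hkm : k + 1 ≤ m := by
      have h1 : p * (2 * (k+1)) ≤ n := by
        calc p * (2 * (k+1)) = 2 * p * (k+1) := by ring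
          _ ≤ n := hnp
      have h2 : 2 * (k + 1) ≤ m := by
        rw [hm, ← Nat.mul_div_cancel_left (2 * (k+1)) hp]
        exact Nat.div_le_div_right h1
      omega
    have hmR : (n:ℝ) / p - 1 < (m:ℝ) := by
      have hdm := Nat.div_add_mod n p
      have hmod : n % p < p := Nat.mod_lt _ hp
      have : (n:ℝ) < p * m + p := by
        have : (p * m + n % p : ℕ) = n := hdm
        have hcast : (p:ℝ) * m + (n % p : ℕ) = n := by exact_mod_cast this
        have : ((n % p : ℕ) : ℝ) < p := by exact_mod_cast hmod
        linarith
      rw [div_sub_one hppos.ne', div_lt_iff₀ hppos]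
      linarith
    have hk1 : (k:ℝ) + 1 ≤ (n:ℝ) / (2 * p) := by
      rw [le_div_iff₀ (by positivity)]
      calc ((k:ℝ) + 1) * (2 * p) = 2 * p * (k + 1) := by ring
        _ ≤ n := by exact_mod_cast hnp
    have hid : (n:ℝ) / p - (n:ℝ) / (2 * p) = (n:ℝ) / (2 * p) := by
      field_simp
      ring
    have hbase : (n:ℝ) / (2 * p) ≤ (m:ℝ) - k := by linarith
    have hbasepos : (0:ℝ) < (n:ℝ) / (2 * p) := by positivity
    have hcastsub : ((m + 1 - k : ℕ) : ℝ) = (m:ℝ) + 1 - k := by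
      have : k ≤ m + 1 := by omega
      push_cast [Nat.cast_sub this]
      ring
    have hchoose : ((n:ℝ) / (2 * p)) ^ k / k.factorial ≤ ((m.choose k : ℕ) : ℝ) := by
      have h1 : ((n:ℝ) / (2 * p)) ^ k ≤ ((m + 1 - k : ℕ) : ℝ) ^ k := by
        apply pow_le_pow_left₀ hbasepos.le
        rw [hcastsub]
        linarith
      have h2 : ((m + 1 - k : ℕ) : ℝ) ^ k / k.factorial ≤ m.choose k :=
        Nat.pow_le_choose k m
      refine le_trans ?_ h2
      have hfpos : (0:ℝ) < k.factorial := by exact_mod_cast k.factorial_pos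
      exact div_le_div_of_nonneg_right h1 hfpos.le
    have hSn : ((n:ℝ) / (2 * p)) ^ k / k.factorial ≤ (S n : ℝ) := by
      refine hchoose.trans ?_
      exact_mod_cast hlo n
    have hvpos : (0:ℝ) < ((n:ℝ) / (2 * p)) ^ k / k.factorial := by positivity
    have hlogS : k * Real.log n - c1 ≤ Real.log (S n) := by
      have hlogv := (Real.log_le_log_iff hvpos (lt_of_lt_of_le hvpos hSn)).mpr hSn
      have hv : Real.log (((n:ℝ) / (2 * p)) ^ k / k.factorial)
          = k * (Real.log n - Real.log (2 * p)) - Real.log k.factorial := by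
        rw [Real.log_div (by positivity) (by positivity), Real.log_pow,
          Real.log_div (by positivity) (by positivity)]
      rw [hv] at hlogv
      rw [hc1]
      linarith
    have h := (div_le_div_iff_of_pos_right hlogpos).mpr hlogS
    calc (k:ℝ) - c1 * (Real.log n)⁻¹ = (k * Real.log n - c1) / Real.log n := by
          field_simp
      _ ≤ Real.log (S n) / Real.log n := h
  · -- upper bound eventually
    filter_upwards [eventually_ge_atTop (max 3 (2 * p * (k + 1)))] with n hn
    have hn3 : 3 ≤ n := le_trans (le_max_left _ _) hn
    have hnp : 2 * p * (k + 1) ≤ n := le_trans (le_max_right _ _) hn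
    have hn3R : (3:ℝ) ≤ (n:ℝ) := by exact_mod_cast hn3
    have hlogpos : 0 < Real.log n := Real.log_pos (by linarith)
    have hkm : k ≤ n / p := by
      have h1 : p * (2 * (k+1)) ≤ n := by
        calc p * (2 * (k+1)) = 2 * p * (k+1) := by ring
          _ ≤ n := hnp
      have h2 : 2 * (k + 1) ≤ n / p := by
        rw [← Nat.mul_div_cancel_left (2 * (k+1)) hp]
        exact Nat.div_le_div_right h1
      omega
    have hS1 : (1:ℝ) ≤ (S n : ℝ) := by
      have := le_trans (Nat.choose_pos hkm) (hlo n)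
      exact_mod_cast this
    have hnpos : (0:ℝ) < (n:ℝ) := by linarith
    have hlogSup : Real.log (S n) ≤ k * Real.log n + c2 := by
      have hub := hup n (by omega)
      have h := (Real.log_le_log_iff (by linarith) (lt_of_lt_of_le (by linarith) hub)).mpr hub
      have hexp : Real.log (C1 * (C2 * n) ^ k)
          = Real.log C1 + k * (Real.log C2 + Real.log n) := by
        rw [Real.log_mul (by linarith) (by positivity), Real.log_pow,
          Real.log_mul (by linarith) (by linarith)]
      rw [hexp] at h
      rw [hc2]
      linarith
    have h := (div_le_div_iff_of_pos_right hlogpos).mpr hlogSup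
    calc Real.log (S n) / Real.log n ≤ (k * Real.log n + c2) / Real.log n := h
      _ = (k:ℝ) + c2 * (Real.log n)⁻¹ := by field_simp

end Limit
-- STATEMENT 1
theorem stmt1 (f : ↥unitInterval ≃ₜ ↥unitInterval) (hNW : (nonWandering ⇑f).Finite)
    (k : ℕ) (hk : 1 ≤ k) :
    polEnt (inducedSym ⇑f f.continuous k) Set.univ = (k : ℝ≥0∞) := by
  obtain ⟨hmono, p, hp, ψ, hψmono, hψf, c, hc⟩ := setup_exists f hNW
  obtain ⟨ε₀, hε₀pos, hlow⟩ := choose_le_maxSep_sym hmono f.continuous hψmono hp hψf hc hk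
  set F := inducedSym ⇑f f.continuous k with hF
  -- upper bound in convenient form
  have hup : ∀ ε : ℝ, 0 < ε → ∀ n : ℕ, 2 ≤ n →
      ((maxSep F Set.univ n ε : ℕ) : ℝ) ≤
        ((k:ℝ)+1) * (((⌊3/ε⌋₊ : ℝ) + 2) * n) ^ k := by
    intro ε hε n hn
    have h1 := maxSep_sym_le hmono f.continuous hε (k := k) (n := n)
    have h2 : ((maxSep F Set.univ n ε : ℕ) : ℝ) ≤
        ((k:ℝ) + 1) * ((n:ℝ) * ((⌊3/ε⌋₊ : ℝ) + 1) + 2) ^ k := by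
      calc ((maxSep F Set.univ n ε : ℕ) : ℝ)
          ≤ (((k + 1) * (n * (⌊3/ε⌋₊ + 1) + 2) ^ k : ℕ) : ℝ) := by exact_mod_cast h1
        _ = ((k:ℝ) + 1) * ((n:ℝ) * ((⌊3/ε⌋₊ : ℝ) + 1) + 2) ^ k := by push_cast; ring
    refine h2.trans ?_
    have hn2 : (2:ℝ) ≤ (n:ℝ) := by exact_mod_cast hn
    have hbase : (n:ℝ) * ((⌊3/ε⌋₊ : ℝ) + 1) + 2 ≤ ((⌊3/ε⌋₊ : ℝ) + 2) * n := by nlinarith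
    have hbnn : (0:ℝ) ≤ (n:ℝ) * ((⌊3/ε⌋₊ : ℝ) + 1) + 2 := by positivity
    have := pow_le_pow_left₀ hbnn hbase k
    nlinarith [pow_nonneg hbnn k]
  -- monotonicity in ε
  have hmonoeps : ∀ (n : ℕ) (ε ε' : ℝ), 0 < ε → ε ≤ ε' →
      maxSep F Set.univ n ε' ≤ maxSep F Set.univ n ε := by
    intro n ε ε' hε hεε
    apply csSup_le_csSup (bddAbove_sepSet hmono f.continuous hε)
    · exact ⟨0, ∅, by simp, rfl, by intro x hx; simp at hx⟩
    · rintro m ⟨E, hE, rfl, hsep⟩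
      exact ⟨E, hE, rfl, fun x hx y hy hxy => hεε.trans (hsep x hx y hy hxy)⟩
  -- exact limit for small ε
  have hlimsup : ∀ ε : ℝ, 0 < ε → ε ≤ ε₀ →
      Filter.atTop.limsup (fun n : ℕ =>
        ENNReal.ofReal (Real.log (maxSep F Set.univ n ε) / Real.log n)) = (k : ℝ≥0∞) := by
    intro ε hε hεε₀
    have hM1 : (1:ℝ) ≤ (k:ℝ) + 1 := by
      have : (1:ℝ) ≤ (k:ℝ) := by exact_mod_cast hk
      linarith
    have hM2 : (1:ℝ) ≤ (⌊3/ε⌋₊ : ℝ) + 2 := by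
      have : (0:ℝ) ≤ (⌊3/ε⌋₊ : ℝ) := Nat.cast_nonneg _
      linarith
    have hlo' : ∀ n : ℕ, (n / p).choose k ≤ maxSep F Set.univ n ε :=
      fun n => (hlow n).trans (hmonoeps n ε ε₀ hε hεε₀)
    have htend := tendsto_log_ratio hk hp hM1 hM2 (hup ε hε) hlo'
    have hcomp := (ENNReal.continuous_ofReal.tendsto (k : ℝ)).comp htend
    rw [show ENNReal.ofReal (k : ℝ) = (k : ℝ≥0∞) from ENNReal.ofReal_natCast k] at hcomp
    exact hcomp.limsup_eq
  -- comparison for large ε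
  have hcompare : ∀ ε : ℝ, ε₀ < ε →
      Filter.atTop.limsup (fun n : ℕ =>
        ENNReal.ofReal (Real.log (maxSep F Set.univ n ε) / Real.log n)) ≤
      Filter.atTop.limsup (fun n : ℕ =>
        ENNReal.ofReal (Real.log (maxSep F Set.univ n ε₀) / Real.log n)) := by
    intro ε hε
    refine Filter.limsup_le_limsup ?_
    filter_upwards [Filter.eventually_ge_atTop 3] with n hn
    by_cases h0 : maxSep F Set.univ n ε = 0
    · rw [h0]
      simp
    · apply ENNReal.ofReal_le_ofReal
      have hlogn : (0:ℝ) ≤ Real.log n := Real.log_nonneg (by exact_mod_cast Nat.one_le_of_lt hn)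
      apply div_le_div_of_nonneg_right _ hlogn
      have hpos : 0 < maxSep F Set.univ n ε := Nat.pos_of_ne_zero h0
      have hle : maxSep F Set.univ n ε ≤ maxSep F Set.univ n ε₀ :=
        hmonoeps n ε₀ ε hε₀pos hε.le
      have hpos' : (0:ℝ) < (maxSep F Set.univ n ε : ℝ) := by exact_mod_cast hpos
      have hpos'' : (0:ℝ) < (maxSep F Set.univ n ε₀ : ℝ) := by
        have : 0 < maxSep F Set.univ n ε₀ := lt_of_lt_of_le hpos hle
        exact_mod_cast this
      exact (Real.log_le_log_iff hpos' hpos'').mpr (by exact_mod_cast hle)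
  -- assemble
  unfold polEnt
  apply le_antisymm
  · apply iSup₂_le
    intro ε hε
    rcases le_or_gt ε ε₀ with h | h
    · exact le_of_eq (hlimsup ε hε h)
    · exact (hcompare ε h).trans (le_of_eq (hlimsup ε₀ hε₀pos le_rfl))
  · refine le_trans (le_of_eq (hlimsup ε₀ hε₀pos le_rfl).symm) ?_
    exact le_iSup₂ (f := fun (ε : ℝ) (_ : 0 < ε) => Filter.atTop.limsup fun n : ℕ =>
      ENNReal.ofReal (Real.log (maxSep F Set.univ n ε) / Real.log n)) ε₀ hε₀pos
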